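/- Let L be a finite set, E a symmetric relation on L, s₁, s₂ : L → ℝ*, and define s(ℓ) = max over subsets A ⊆ L with ℓ ∈ A of min( min_{ℓ' ∈ A} s₁(ℓ'), min_{ℓ'' ∈ B⁺(A)} s₂(ℓ'') ). Let 𝒳 be the iteration 𝒳(0,ℓ) = s₁(ℓ), 𝒳(i+1,ℓ) = min(𝒳(i,ℓ), min_{ℓ' : ℓ E ℓ'} max(𝒳(i,ℓ'), s₂(ℓ'))). Then the limit (eventual stable value) of 𝒳(i,ℓ) as i → ∞ equals s(ℓ) for every ℓ ∈ L. -/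

import Mathlib

/-- The fixed-point iteration of the quantitative surrounded monitoring algorithm:
`X 0 ℓ = s₁ ℓ` and
`X (i+1) ℓ = min (X i ℓ) (⨅ neighbours ℓ' of ℓ, max (X i ℓ') (s₂ ℓ'))`.
The infimum over an empty set of neighbours is `+∞`. -/
noncomputable def XIter {L : Type*} (E : L → L → Prop) (s₁ s₂ : L → EReal) :
    ℕ → L → EReal
  | 0, ℓ => s₁ ℓ
  | (i+1), ℓ =>
      min (XIter E s₁ s₂ i ℓ)
        (⨅ ℓ' : {ℓ' // E ℓ ℓ'}, max (XIter E s₁ s₂ i ℓ') (s₂ ℓ'))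

/-- The external boundary `B⁺(A)` of a set of locations `A`:
locations not in `A` directly connected to an element of `A`. -/
def extBoundary {L : Type*} (E : L → L → Prop) (A : Set L) : Set L :=
  {ℓ | ℓ ∉ A ∧ ∃ ℓ' ∈ A, E ℓ' ℓ}

/-- The quantitative surrounded score:
`s ℓ = ⨆ {A ⊆ L | ℓ ∈ A}, min (⨅ ℓ' ∈ A, s₁ ℓ') (⨅ ℓ'' ∈ B⁺(A), s₂ ℓ'')`. -/
noncomputable def surrScore {L : Type*} (E : L → L → Prop) (s₁ s₂ : L → EReal)
    (ℓ : L) : EReal :=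
  ⨆ A ∈ {A : Set L | ℓ ∈ A},
    min (⨅ ℓ' ∈ A, s₁ ℓ') (⨅ ℓ'' ∈ extBoundary E A, s₂ ℓ'')

section Aux

set_option linter.unusedSectionVars false

variable {L : Type*} [Fintype L] (E : L → L → Prop) (s₁ s₂ : L → EReal)

lemma XIter_succ_le (i : ℕ) (ℓ : L) :
    XIter E s₁ s₂ (i+1) ℓ ≤ XIter E s₁ s₂ i ℓ := min_le_left _ _

lemma XIter_anti (ℓ : L) : Antitone (fun i => XIter E s₁ s₂ i ℓ) :=
  antitone_nat_of_succ_le fun i => XIter_succ_le E s₁ s₂ i ℓ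

/-- values of `XIter` lie in a fixed finite set -/
lemma XIter_mem (i : ℕ) (ℓ : L) :
    XIter E s₁ s₂ i ℓ ∈ Set.range s₁ ∪ Set.range s₂ ∪ {⊤} := by
  induction i generalizing ℓ with
  | zero => exact Or.inl (Or.inl ⟨ℓ, rfl⟩)
  | succ i ih =>
    show min _ _ ∈ _
    rcases min_cases (XIter E s₁ s₂ i ℓ)
      (⨅ ℓ' : {ℓ' // E ℓ ℓ'}, max (XIter E s₁ s₂ i ℓ') (s₂ ℓ')) with ⟨h, _⟩ | ⟨h, _⟩
    · rw [h]; exact ih ℓ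
    · rw [h]
      rcases isEmpty_or_nonempty {ℓ' // E ℓ ℓ'} with hempty | hne
      · rw [iInf_of_empty]; exact Or.inr rfl
      · obtain ⟨x, hx⟩ := Finite.exists_min
          (fun ℓ' : {ℓ' // E ℓ ℓ'} => max (XIter E s₁ s₂ i ℓ') (s₂ ℓ'))
        have : (⨅ ℓ' : {ℓ' // E ℓ ℓ'}, max (XIter E s₁ s₂ i ℓ') (s₂ ℓ'))
            = max (XIter E s₁ s₂ i x) (s₂ x) :=
          le_antisymm (iInf_le _ x) (le_iInf hx)
        rw [this]
        rcases max_cases (XIter E s₁ s₂ i (x : L)) (s₂ x) with ⟨h', _⟩ | ⟨h', _⟩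
        · rw [h']; exact ih x
        · rw [h']; exact Or.inl (Or.inr ⟨x, rfl⟩)

/-- lower bound: every candidate set `A` bounds the iteration from below -/
lemma surr_le_XIter (A : Set L) :
    ∀ i, ∀ ℓ ∈ A,
      min (⨅ ℓ' ∈ A, s₁ ℓ') (⨅ ℓ'' ∈ extBoundary E A, s₂ ℓ'') ≤ XIter E s₁ s₂ i ℓ := by
  intro i
  induction i with
  | zero => exact fun ℓ hℓ => (min_le_left _ _).trans (iInf₂_le ℓ hℓ)
  | succ i ih =>
    intro ℓ hℓ
    refine le_min (ih ℓ hℓ) (le_iInf fun ⟨ℓ'', h⟩ => ?_)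
    by_cases hm : ℓ'' ∈ A
    · exact (ih ℓ'' hm).trans (le_max_left _ _)
    · exact ((min_le_right _ _).trans (iInf₂_le ℓ'' ⟨hm, ℓ, hℓ, h⟩)).trans (le_max_right _ _)

/-- upper bound at a fixed point -/
lemma fixedPoint_le_surr (Y : L → EReal)
    (h0 : ∀ ℓ, Y ℓ ≤ s₁ ℓ)
    (hfix : ∀ ℓ ℓ', E ℓ ℓ' → Y ℓ ≤ max (Y ℓ') (s₂ ℓ'))
    (ℓ : L) : Y ℓ ≤ surrScore E s₁ s₂ ℓ := by
  classical
  set A : Set L := {ℓ' | Y ℓ ≤ Y ℓ'} with hA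
  have hℓA : ℓ ∈ A := by simp [hA]
  refine le_trans (le_min ?_ ?_)
    (le_iSup₂ (f := fun A (_ : A ∈ {A : Set L | ℓ ∈ A}) =>
      min (⨅ ℓ' ∈ A, s₁ ℓ') (⨅ ℓ'' ∈ extBoundary E A, s₂ ℓ'')) A hℓA)
  · exact le_iInf₂ fun ℓ' h' => le_trans h' (h0 ℓ')
  · refine le_iInf₂ fun ℓ'' h'' => ?_
    obtain ⟨hn, ℓ', hA', hE'⟩ := h''
    have h1 : Y ℓ ≤ max (Y ℓ'') (s₂ ℓ'') := le_trans hA' (hfix ℓ' ℓ'' hE')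
    exact (le_max_iff.mp h1).resolve_left hn

/-- the iteration stabilizes pointwise -/
lemma XIter_exists_stab (ℓ : L) :
    ∃ K, ∀ j ≥ K, XIter E s₁ s₂ j ℓ = XIter E s₁ s₂ K ℓ := by
  have hfin : (Set.range (fun i => XIter E s₁ s₂ i ℓ)).Finite :=
    (((Set.finite_range s₁).union (Set.finite_range s₂)).union
      (Set.finite_singleton ⊤)).subset
      (by rintro _ ⟨i, rfl⟩; exact XIter_mem E s₁ s₂ i ℓ)
  obtain ⟨m, ⟨K, hK⟩, hmin⟩ := Set.exists_min_image _ id hfin ⟨_, ⟨0, rfl⟩⟩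
  refine ⟨K, fun j hj => le_antisymm (XIter_anti E s₁ s₂ ℓ hj) ?_⟩
  calc XIter E s₁ s₂ K ℓ = m := hK
    _ ≤ XIter E s₁ s₂ j ℓ := hmin _ ⟨j, rfl⟩

end Aux

theorem stmt7 {L : Type*} [Fintype L] (E : L → L → Prop) (hE : Symmetric E)
    (s₁ s₂ : L → EReal) :
    ∃ K : ℕ, ∀ j ≥ K, ∀ ℓ : L, XIter E s₁ s₂ j ℓ = surrScore E s₁ s₂ ℓ := by
  classical
  choose Kf hKf using fun ℓ => XIter_exists_stab E s₁ s₂ ℓ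
  set K := Finset.univ.sup Kf with hKdef
  have hKle : ∀ ℓ : L, Kf ℓ ≤ K := fun ℓ => Finset.le_sup (Finset.mem_univ ℓ)
  have hstab : ∀ j ≥ K, ∀ ℓ, XIter E s₁ s₂ j ℓ = XIter E s₁ s₂ K ℓ := by
    intro j hj ℓ
    rw [hKf ℓ j (le_trans (hKle ℓ) hj), hKf ℓ K (hKle ℓ)]
  set Y : L → EReal := XIter E s₁ s₂ K with hY
  have h0 : ∀ ℓ, Y ℓ ≤ s₁ ℓ := fun ℓ => XIter_anti E s₁ s₂ ℓ (Nat.zero_le K)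
  have hfix : ∀ ℓ ℓ', E ℓ ℓ' → Y ℓ ≤ max (Y ℓ') (s₂ ℓ') := by
    intro ℓ ℓ' hEℓ
    have h1 : Y ℓ = XIter E s₁ s₂ (K+1) ℓ := (hstab (K+1) (Nat.le_succ K) ℓ).symm
    calc Y ℓ = XIter E s₁ s₂ (K+1) ℓ := h1
      _ ≤ ⨅ ℓ'' : {ℓ'' // E ℓ ℓ''}, max (XIter E s₁ s₂ K ℓ'') (s₂ ℓ'') := min_le_right _ _
      _ ≤ max (XIter E s₁ s₂ K ℓ') (s₂ ℓ') := iInf_le (ι := {ℓ'' // E ℓ ℓ''}) _ ⟨ℓ', hEℓ⟩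
  refine ⟨K, fun j hj ℓ => ?_⟩
  rw [hstab j hj ℓ]
  refine le_antisymm (fixedPoint_le_surr E s₁ s₂ Y h0 hfix ℓ) ?_
  exact iSup₂_le fun A hA => surr_le_XIter E s₁ s₂ A K ℓ hA
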